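/- Let σ ∈ ℝ, σ ≠ 0, and let ω₀, ω₁ : ℝ² → ℝ be twice continuously differentiable functions related by the Bäcklund transformation for the hyperbolic sine-Gordon equation with parameter σ, i.e. ∂ω₁/∂v − ∂ω₀/∂u = (σ·sin(ω₁+ω₀) + σ⁻¹·sin(ω₁−ω₀))/2 and ∂ω₁/∂u − ∂ω₀/∂v = (σ·sin(ω₁+ω₀) − σ⁻¹·sin(ω₁−ω₀))/2 everywhere. Then both ω₀ and ω₁ satisfy the hyperbolic sine-Gordon equation: ∂²ωⱼ/∂v² − ∂²ωⱼ/∂u² = cos ωⱼ · sin ωⱼ for j = 0, 1, at every point of ℝ². -/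

import Mathlib

/-- Partial derivative with respect to the first variable `u`. -/
noncomputable def pdu (f : ℝ × ℝ → ℝ) (p : ℝ × ℝ) : ℝ :=
  deriv (fun u => f (u, p.2)) p.1

/-- Partial derivative with respect to the second variable `v`. -/
noncomputable def pdv (f : ℝ × ℝ → ℝ) (p : ℝ × ℝ) : ℝ :=
  deriv (fun v => f (p.1, v)) p.2

/-- The pair `(ω₀, ω₁)` is related by the Bäcklund transformation for the
hyperbolic sine-Gordon equation with parameter `σ`. -/
def BacklundSG (σ : ℝ) (ω₀ ω₁ : ℝ × ℝ → ℝ) : Prop :=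
  ∀ p : ℝ × ℝ,
    pdv ω₁ p - pdu ω₀ p =
      (σ * Real.sin (ω₁ p + ω₀ p) + σ⁻¹ * Real.sin (ω₁ p - ω₀ p)) / 2 ∧
    pdu ω₁ p - pdv ω₀ p =
      (σ * Real.sin (ω₁ p + ω₀ p) - σ⁻¹ * Real.sin (ω₁ p - ω₀ p)) / 2

lemma hasDerivAt_u' {f : ℝ × ℝ → ℝ} {p : ℝ × ℝ} (hf : DifferentiableAt ℝ f p) :
    HasDerivAt (fun u => f (u, p.2)) (fderiv ℝ f p (1, 0)) p.1 := by
  have h : HasDerivAt (fun u : ℝ => (u, p.2)) ((1 : ℝ), (0 : ℝ)) p.1 :=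
    (hasDerivAt_id p.1).prodMk (hasDerivAt_const p.1 p.2)
  have := hf.hasFDerivAt.comp_hasDerivAt p.1 (by simpa using h)
  exact this

lemma hasDerivAt_v' {f : ℝ × ℝ → ℝ} {p : ℝ × ℝ} (hf : DifferentiableAt ℝ f p) :
    HasDerivAt (fun v => f (p.1, v)) (fderiv ℝ f p (0, 1)) p.2 := by
  have h : HasDerivAt (fun v : ℝ => (p.1, v)) ((0 : ℝ), (1 : ℝ)) p.2 :=
    (hasDerivAt_const p.2 p.1).prodMk (hasDerivAt_id p.2)
  have := hf.hasFDerivAt.comp_hasDerivAt p.2 (by simpa using h)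
  exact this

lemma pdu_eq {f : ℝ × ℝ → ℝ} {p : ℝ × ℝ} (hf : DifferentiableAt ℝ f p) :
    pdu f p = fderiv ℝ f p (1, 0) := (hasDerivAt_u' hf).deriv

lemma pdv_eq {f : ℝ × ℝ → ℝ} {p : ℝ × ℝ} (hf : DifferentiableAt ℝ f p) :
    pdv f p = fderiv ℝ f p (0, 1) := (hasDerivAt_v' hf).deriv

lemma hasDerivAt_pdu {f : ℝ × ℝ → ℝ} {p : ℝ × ℝ} (hf : DifferentiableAt ℝ f p) :
    HasDerivAt (fun u => f (u, p.2)) (pdu f p) p.1 := by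
  rw [pdu_eq hf]; exact hasDerivAt_u' hf

lemma hasDerivAt_pdv {f : ℝ × ℝ → ℝ} {p : ℝ × ℝ} (hf : DifferentiableAt ℝ f p) :
    HasDerivAt (fun v => f (p.1, v)) (pdv f p) p.2 := by
  rw [pdv_eq hf]; exact hasDerivAt_v' hf

variable {f : ℝ × ℝ → ℝ}

lemma diff_fderiv (hf : ContDiff ℝ 2 f) : Differentiable ℝ (fderiv ℝ f) :=
  (hf.fderiv_right (m := 1) one_add_one_eq_two.le).differentiable one_ne_zero

lemma pd_dir_eq (hf : ContDiff ℝ 2 f) (w : ℝ × ℝ) : Differentiable ℝ (fun q => fderiv ℝ f q w) :=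
  fun q => ((ContinuousLinearMap.apply ℝ ℝ w).differentiableAt).comp q ((diff_fderiv hf) q)

lemma fderiv_dir (hf : ContDiff ℝ 2 f) (p w w' : ℝ × ℝ) :
    fderiv ℝ (fun q => fderiv ℝ f q w) p w' = fderiv ℝ (fderiv ℝ f) p w' w := by
  have h : HasFDerivAt (fun q => fderiv ℝ f q w)
      ((ContinuousLinearMap.apply ℝ ℝ w).comp (fderiv ℝ (fderiv ℝ f) p)) p :=
    ((ContinuousLinearMap.apply ℝ ℝ w).hasFDerivAt).comp p ((diff_fderiv hf p).hasFDerivAt)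
  rw [h.fderiv]; rfl

lemma pdu_fun_eq (hf : ContDiff ℝ 2 f) : pdu f = fun q => fderiv ℝ f q (1, 0) :=
  funext fun q => pdu_eq (hf.differentiable two_ne_zero q)

lemma pdv_fun_eq (hf : ContDiff ℝ 2 f) : pdv f = fun q => fderiv ℝ f q (0, 1) :=
  funext fun q => pdv_eq (hf.differentiable two_ne_zero q)

lemma diff_pdu (hf : ContDiff ℝ 2 f) : Differentiable ℝ (pdu f) := by
  rw [pdu_fun_eq hf]; exact pd_dir_eq hf _

lemma diff_pdv (hf : ContDiff ℝ 2 f) : Differentiable ℝ (pdv f) := by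
  rw [pdv_fun_eq hf]; exact pd_dir_eq hf _

lemma pd2 (hf : ContDiff ℝ 2 f) (p w w' : ℝ × ℝ) :
    fderiv ℝ (fderiv ℝ f) p w w' = fderiv ℝ (fderiv ℝ f) p w' w :=
  second_derivative_symmetric (fun y => (hf.differentiable two_ne_zero y).hasFDerivAt)
    ((diff_fderiv hf p).hasFDerivAt) w w'

lemma pdu_pdv_comm (hf : ContDiff ℝ 2 f) (p : ℝ × ℝ) : pdu (pdv f) p = pdv (pdu f) p := by
  rw [pdu_eq ((diff_pdv hf) p), pdv_eq ((diff_pdu hf) p), pdu_fun_eq hf, pdv_fun_eq hf,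
    fderiv_dir hf, fderiv_dir hf, pd2 hf]


/-- If twice continuously differentiable `ω₀, ω₁ : ℝ² → ℝ` are related by the Bäcklund
transformation for the hyperbolic sine-Gordon equation with parameter `σ ≠ 0`, then both
satisfy the hyperbolic sine-Gordon equation `∂²ω/∂v² − ∂²ω/∂u² = cos ω · sin ω`. -/
theorem backlund_implies_hyperbolic_sineGordon
    (σ : ℝ) (hσ : σ ≠ 0) (ω₀ ω₁ : ℝ × ℝ → ℝ)
    (hω₀ : ContDiff ℝ 2 ω₀) (hω₁ : ContDiff ℝ 2 ω₁)
    (hB : BacklundSG σ ω₀ ω₁) :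
    (∀ p : ℝ × ℝ,
        pdv (pdv ω₀) p - pdu (pdu ω₀) p = Real.cos (ω₀ p) * Real.sin (ω₀ p)) ∧
    (∀ p : ℝ × ℝ,
        pdv (pdv ω₁) p - pdu (pdu ω₁) p = Real.cos (ω₁ p) * Real.sin (ω₁ p)) := by
  have h0d : Differentiable ℝ ω₀ := hω₀.differentiable two_ne_zero
  have h1d : Differentiable ℝ ω₁ := hω₁.differentiable two_ne_zero
  have h2 : σ * σ⁻¹ = 1 := mul_inv_cancel₀ hσ
  have key : ∀ p : ℝ × ℝ,
      (pdv (pdv ω₀) p - pdu (pdu ω₀) p = Real.cos (ω₀ p) * Real.sin (ω₀ p)) ∧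
      (pdv (pdv ω₁) p - pdu (pdu ω₁) p = Real.cos (ω₁ p) * Real.sin (ω₁ p)) := by
    intro p
    -- one-variable derivatives of ω's
    have h1u : HasDerivAt (fun u => ω₁ (u, p.2)) (pdu ω₁ p) p.1 := hasDerivAt_pdu (h1d p)
    have h0u : HasDerivAt (fun u => ω₀ (u, p.2)) (pdu ω₀ p) p.1 := hasDerivAt_pdu (h0d p)
    have h1v : HasDerivAt (fun v => ω₁ (p.1, v)) (pdv ω₁ p) p.2 := hasDerivAt_pdv (h1d p)
    have h0v : HasDerivAt (fun v => ω₀ (p.1, v)) (pdv ω₀ p) p.2 := hasDerivAt_pdv (h0d p)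
    -- sin compositions
    have hsp_u : HasDerivAt (fun u => Real.sin (ω₁ (u, p.2) + ω₀ (u, p.2)))
        (Real.cos (ω₁ p + ω₀ p) * (pdu ω₁ p + pdu ω₀ p)) p.1 :=
      by have := (Real.hasDerivAt_sin (ω₁ p + ω₀ p)).comp p.1 (h1u.add h0u); exact this
    have hsm_u : HasDerivAt (fun u => Real.sin (ω₁ (u, p.2) - ω₀ (u, p.2)))
        (Real.cos (ω₁ p - ω₀ p) * (pdu ω₁ p - pdu ω₀ p)) p.1 :=
      by have := (Real.hasDerivAt_sin (ω₁ p - ω₀ p)).comp p.1 (h1u.sub h0u); exact this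
    have hsp_v : HasDerivAt (fun v => Real.sin (ω₁ (p.1, v) + ω₀ (p.1, v)))
        (Real.cos (ω₁ p + ω₀ p) * (pdv ω₁ p + pdv ω₀ p)) p.2 :=
      by have := (Real.hasDerivAt_sin (ω₁ p + ω₀ p)).comp p.2 (h1v.add h0v); exact this
    have hsm_v : HasDerivAt (fun v => Real.sin (ω₁ (p.1, v) - ω₀ (p.1, v)))
        (Real.cos (ω₁ p - ω₀ p) * (pdv ω₁ p - pdv ω₀ p)) p.2 :=
      by have := (Real.hasDerivAt_sin (ω₁ p - ω₀ p)).comp p.2 (h1v.sub h0v); exact this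
    -- E1 : ∂u of equation A
    have E1 : pdu (pdv ω₁) p - pdu (pdu ω₀) p =
        (σ * (Real.cos (ω₁ p + ω₀ p) * (pdu ω₁ p + pdu ω₀ p)) +
          σ⁻¹ * (Real.cos (ω₁ p - ω₀ p) * (pdu ω₁ p - pdu ω₀ p))) / 2 := by
      have hL : HasDerivAt (fun u => pdv ω₁ (u, p.2) - pdu ω₀ (u, p.2))
          (pdu (pdv ω₁) p - pdu (pdu ω₀) p) p.1 :=
        (hasDerivAt_pdu ((diff_pdv hω₁) p)).sub (hasDerivAt_pdu ((diff_pdu hω₀) p))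
      have hR := ((hsp_u.const_mul σ).add (hsm_u.const_mul σ⁻¹)).div_const 2
      have hfun : (fun u => pdv ω₁ (u, p.2) - pdu ω₀ (u, p.2)) =
          (fun u => (σ * Real.sin (ω₁ (u, p.2) + ω₀ (u, p.2)) +
            σ⁻¹ * Real.sin (ω₁ (u, p.2) - ω₀ (u, p.2))) / 2) :=
        funext fun u => (hB (u, p.2)).1
      rw [hfun] at hL
      exact hL.unique hR
    -- E2 : ∂v of equation B
    have E2 : pdv (pdu ω₁) p - pdv (pdv ω₀) p =
        (σ * (Real.cos (ω₁ p + ω₀ p) * (pdv ω₁ p + pdv ω₀ p)) -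
          σ⁻¹ * (Real.cos (ω₁ p - ω₀ p) * (pdv ω₁ p - pdv ω₀ p))) / 2 := by
      have hL : HasDerivAt (fun v => pdu ω₁ (p.1, v) - pdv ω₀ (p.1, v))
          (pdv (pdu ω₁) p - pdv (pdv ω₀) p) p.2 :=
        (hasDerivAt_pdv ((diff_pdu hω₁) p)).sub (hasDerivAt_pdv ((diff_pdv hω₀) p))
      have hR := ((hsp_v.const_mul σ).sub (hsm_v.const_mul σ⁻¹)).div_const 2
      have hfun : (fun v => pdu ω₁ (p.1, v) - pdv ω₀ (p.1, v)) =
          (fun v => (σ * Real.sin (ω₁ (p.1, v) + ω₀ (p.1, v)) -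
            σ⁻¹ * Real.sin (ω₁ (p.1, v) - ω₀ (p.1, v))) / 2) :=
        funext fun v => (hB (p.1, v)).2
      rw [hfun] at hL
      exact hL.unique hR
    -- E3 : ∂v of equation A
    have E3 : pdv (pdv ω₁) p - pdv (pdu ω₀) p =
        (σ * (Real.cos (ω₁ p + ω₀ p) * (pdv ω₁ p + pdv ω₀ p)) +
          σ⁻¹ * (Real.cos (ω₁ p - ω₀ p) * (pdv ω₁ p - pdv ω₀ p))) / 2 := by
      have hL : HasDerivAt (fun v => pdv ω₁ (p.1, v) - pdu ω₀ (p.1, v))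
          (pdv (pdv ω₁) p - pdv (pdu ω₀) p) p.2 :=
        (hasDerivAt_pdv ((diff_pdv hω₁) p)).sub (hasDerivAt_pdv ((diff_pdu hω₀) p))
      have hR := ((hsp_v.const_mul σ).add (hsm_v.const_mul σ⁻¹)).div_const 2
      have hfun : (fun v => pdv ω₁ (p.1, v) - pdu ω₀ (p.1, v)) =
          (fun v => (σ * Real.sin (ω₁ (p.1, v) + ω₀ (p.1, v)) +
            σ⁻¹ * Real.sin (ω₁ (p.1, v) - ω₀ (p.1, v))) / 2) :=
        funext fun v => (hB (p.1, v)).1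
      rw [hfun] at hL
      exact hL.unique hR
    -- E4 : ∂u of equation B
    have E4 : pdu (pdu ω₁) p - pdu (pdv ω₀) p =
        (σ * (Real.cos (ω₁ p + ω₀ p) * (pdu ω₁ p + pdu ω₀ p)) -
          σ⁻¹ * (Real.cos (ω₁ p - ω₀ p) * (pdu ω₁ p - pdu ω₀ p))) / 2 := by
      have hL : HasDerivAt (fun u => pdu ω₁ (u, p.2) - pdv ω₀ (u, p.2))
          (pdu (pdu ω₁) p - pdu (pdv ω₀) p) p.1 :=
        (hasDerivAt_pdu ((diff_pdu hω₁) p)).sub (hasDerivAt_pdu ((diff_pdv hω₀) p))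
      have hR := ((hsp_u.const_mul σ).sub (hsm_u.const_mul σ⁻¹)).div_const 2
      have hfun : (fun u => pdu ω₁ (u, p.2) - pdv ω₀ (u, p.2)) =
          (fun u => (σ * Real.sin (ω₁ (u, p.2) + ω₀ (u, p.2)) -
            σ⁻¹ * Real.sin (ω₁ (u, p.2) - ω₀ (u, p.2))) / 2) :=
        funext fun u => (hB (u, p.2)).2
      rw [hfun] at hL
      exact hL.unique hR
    have hc1 : pdu (pdv ω₁) p = pdv (pdu ω₁) p := pdu_pdv_comm hω₁ p
    have hc0 : pdu (pdv ω₀) p = pdv (pdu ω₀) p := pdu_pdv_comm hω₀ p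
    have hd : pdv ω₁ p = pdu ω₀ p +
        (σ * Real.sin (ω₁ p + ω₀ p) + σ⁻¹ * Real.sin (ω₁ p - ω₀ p)) / 2 := by
      linarith [(hB p).1]
    have hcc : pdu ω₁ p = pdv ω₀ p +
        (σ * Real.sin (ω₁ p + ω₀ p) - σ⁻¹ * Real.sin (ω₁ p - ω₀ p)) / 2 := by
      linarith [(hB p).2]
    constructor
    · have key0 : pdv (pdv ω₀) p - pdu (pdu ω₀) p =
          ((σ * (Real.cos (ω₁ p + ω₀ p) * (pdu ω₁ p + pdu ω₀ p)) +
            σ⁻¹ * (Real.cos (ω₁ p - ω₀ p) * (pdu ω₁ p - pdu ω₀ p))) / 2) -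
          ((σ * (Real.cos (ω₁ p + ω₀ p) * (pdv ω₁ p + pdv ω₀ p)) -
            σ⁻¹ * (Real.cos (ω₁ p - ω₀ p) * (pdv ω₁ p - pdv ω₀ p))) / 2) := by
        linear_combination E1 - E2 - hc1
      rw [hd, hcc] at key0
      rw [key0]
      have trig0 : Real.sin (ω₁ p + ω₀ p) * Real.cos (ω₁ p - ω₀ p) -
          Real.cos (ω₁ p + ω₀ p) * Real.sin (ω₁ p - ω₀ p) =
          2 * Real.sin (ω₀ p) * Real.cos (ω₀ p) := by
        rw [← Real.sin_sub]
        have h : (ω₁ p + ω₀ p) - (ω₁ p - ω₀ p) = 2 * ω₀ p := by ring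
        rw [h, Real.sin_two_mul]
      linear_combination (σ * σ⁻¹ / 2) * trig0 + (Real.sin (ω₀ p) * Real.cos (ω₀ p)) * h2
    · have key1 : pdv (pdv ω₁) p - pdu (pdu ω₁) p =
          ((σ * (Real.cos (ω₁ p + ω₀ p) * (pdv ω₁ p + pdv ω₀ p)) +
            σ⁻¹ * (Real.cos (ω₁ p - ω₀ p) * (pdv ω₁ p - pdv ω₀ p))) / 2) -
          ((σ * (Real.cos (ω₁ p + ω₀ p) * (pdu ω₁ p + pdu ω₀ p)) -
            σ⁻¹ * (Real.cos (ω₁ p - ω₀ p) * (pdu ω₁ p - pdu ω₀ p))) / 2) := by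
        linear_combination E3 - E4 - hc0
      rw [hd, hcc] at key1
      rw [key1]
      have trig1 : Real.sin (ω₁ p + ω₀ p) * Real.cos (ω₁ p - ω₀ p) +
          Real.cos (ω₁ p + ω₀ p) * Real.sin (ω₁ p - ω₀ p) =
          2 * Real.sin (ω₁ p) * Real.cos (ω₁ p) := by
        rw [← Real.sin_add]
        have h : (ω₁ p + ω₀ p) + (ω₁ p - ω₀ p) = 2 * ω₁ p := by ring
        rw [h, Real.sin_two_mul]
      linear_combination (σ * σ⁻¹ / 2) * trig1 + (Real.sin (ω₁ p) * Real.cos (ω₁ p)) * h2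
  exact ⟨fun p => (key p).1, fun p => (key p).2⟩
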